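/- Let V be a real vector space and let a₁, b₁, a₂, b₂ ∈ V be vectors such that {a₁, b₁} is linearly independent and {a₂, b₂} is linearly independent. Then in the exterior algebra of V, the wedge product (a₁ ∧ b₁) ∧ (a₂ ∧ b₂) equals 0 if and only if the subspaces span{a₁, b₁} and span{a₂, b₂} have nontrivial intersection (i.e., their intersection is not the zero subspace). Geometrically: two lines, represented as simple bivectors, lie in a common plane if and only if their wedge product vanishes. -/

import Mathlib

open ExteriorAlgebra

/-- The `ιMulti` of a linearly independent family is nonzero. -/
theorem aux_iMulti_ne_zero {V : Type*} [AddCommGroup V] [Module ℝ V]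
    {n : ℕ} {v : Fin n → V} (hv : LinearIndependent ℝ v) :
    ExteriorAlgebra.ιMulti ℝ n v ≠ 0 := by
  classical
  set S := Submodule.span ℝ (Set.range v) with hS
  obtain ⟨q, hq⟩ := S.exists_isCompl
  let proj : V →ₗ[ℝ] S := S.linearProjOfIsCompl q hq
  let b : Module.Basis (Fin n) ℝ S := Module.Basis.span hv
  let F : V [⋀^Fin n]→ₗ[ℝ] ℝ := b.det.compLinearMap proj
  let f : ∀ i, V [⋀^Fin i]→ₗ[ℝ] ℝ :=
    Function.update (fun i => (0 : V [⋀^Fin i]→ₗ[ℝ] ℝ)) n F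
  intro h
  have h1 : liftAlternating f (ιMulti ℝ n v) = F v := by
    rw [liftAlternating_apply_ιMulti]
    simp [f]
  have hproj : ∀ i, proj (v i) = b i := by
    intro i
    have hmem : v i ∈ S := Submodule.subset_span (Set.mem_range_self i)
    have : b i = ⟨v i, hmem⟩ := Module.Basis.span_apply hv i
    rw [this]
    exact Submodule.linearProjOfIsCompl_apply_left hq ⟨v i, hmem⟩
  have h2 : F v = 1 := by
    have : F v = b.det fun i => proj (v i) := rfl
    rw [this]
    simp_rw [hproj]
    exact b.det_self
  rw [h, map_zero] at h1
  rw [h2] at h1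
  exact one_ne_zero h1.symm

/-- **Coplanarity criterion for simple bivectors.**
For vectors `a₁, b₁, a₂, b₂` in a real vector space `V` with `{a₁, b₁}` and `{a₂, b₂}`
each linearly independent, the wedge product `(a₁ ∧ b₁) ∧ (a₂ ∧ b₂)` in the exterior
algebra of `V` vanishes if and only if the planes `span {a₁, b₁}` and `span {a₂, b₂}`
intersect nontrivially (i.e. the two lines represented by the simple bivectors lie in
a common plane). -/
theorem simple_bivectors_wedge_eq_zero_iff_spans_inter_ne_bot
    {V : Type*} [AddCommGroup V] [Module ℝ V]
    (a₁ b₁ a₂ b₂ : V)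
    (h₁ : LinearIndependent ℝ ![a₁, b₁])
    (h₂ : LinearIndependent ℝ ![a₂, b₂]) :
    (ExteriorAlgebra.ι ℝ a₁ * ExteriorAlgebra.ι ℝ b₁) *
      (ExteriorAlgebra.ι ℝ a₂ * ExteriorAlgebra.ι ℝ b₂) = 0 ↔
      Submodule.span ℝ ({a₁, b₁} : Set V) ⊓ Submodule.span ℝ ({a₂, b₂} : Set V) ≠ ⊥ := by
  have range1 : Set.range ![a₁, b₁] = {a₁, b₁} := by
    simp [Matrix.range_cons, Matrix.range_empty, Set.pair_comm]
  have range2 : Set.range ![a₂, b₂] = {a₂, b₂} := by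
    simp [Matrix.range_cons, Matrix.range_empty, Set.pair_comm]
  constructor
  · -- hard direction: wedge = 0 → spans intersect
    intro hP
    by_contra hbot
    -- the four vectors are linearly independent
    have hdisj : Disjoint (Submodule.span ℝ (Set.range ![a₁, b₁]))
        (Submodule.span ℝ (Set.range ![a₂, b₂])) := by
      rw [range1, range2, disjoint_iff, hbot]
    have hsum : LinearIndependent ℝ (Sum.elim ![a₁, b₁] ![a₂, b₂]) :=
      h₁.sum_type h₂ hdisj
    have h4 : LinearIndependent ℝ ![a₁, b₁, a₂, b₂] := by
      have := hsum.comp (finSumFinEquiv (m := 2) (n := 2)).symm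
        (finSumFinEquiv.symm.injective)
      convert this using 1
      funext i
      fin_cases i <;> rfl
    have := aux_iMulti_ne_zero h4
    apply this
    rw [ιMulti_apply]
    simpa [List.ofFn_succ, mul_assoc] using hP
  · -- easy direction: common nonzero vector → wedge = 0
    intro hbot
    obtain ⟨v, hv, hv0⟩ := Submodule.ne_bot_iff _ |>.mp hbot
    obtain ⟨hv1, hv2⟩ := Submodule.mem_inf.mp hv
    obtain ⟨α, β, hαβ⟩ := Submodule.mem_span_pair.mp hv1
    obtain ⟨γ, δ, hγδ⟩ := Submodule.mem_span_pair.mp hv2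
    set iv := ExteriorAlgebra.ι ℝ v with hiv
    -- key: ι v * ι v = 0 kills products having two adjacent copies of ι v
    have key : ∀ (x y : V) (c d : ℝ),
        (c • (ExteriorAlgebra.ι ℝ x * iv)) * (d • (iv * ExteriorAlgebra.ι ℝ y)) = 0 := by
      intro x y c d
      have : iv * iv = 0 := ExteriorAlgebra.ι_sq_zero v
      rw [smul_mul_assoc, mul_smul_comm, mul_assoc, ← mul_assoc iv, this, zero_mul, mul_zero,
        smul_zero, smul_zero]
    -- factor the first bivector with ι v on the right
    have hfac1 : ∃ (x : V) (c : ℝ),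
        ExteriorAlgebra.ι ℝ a₁ * ExteriorAlgebra.ι ℝ b₁ = c • (ExteriorAlgebra.ι ℝ x * iv) := by
      by_cases hα : α = 0
      · have hβ : β ≠ 0 := by
          intro hβ; apply hv0; rw [← hαβ, hα, hβ, zero_smul, zero_smul, add_zero]
        refine ⟨a₁, β⁻¹, ?_⟩
        have : ExteriorAlgebra.ι ℝ a₁ * iv = β • (ExteriorAlgebra.ι ℝ a₁ * ExteriorAlgebra.ι ℝ b₁) := by
          rw [hiv, ← hαβ, hα, zero_smul, zero_add, map_smul, mul_smul_comm]
        rw [this, smul_smul, inv_mul_cancel₀ hβ, one_smul]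
      · refine ⟨b₁, -α⁻¹, ?_⟩
        have : ExteriorAlgebra.ι ℝ b₁ * iv
            = (-α) • (ExteriorAlgebra.ι ℝ a₁ * ExteriorAlgebra.ι ℝ b₁) := by
          rw [hiv, ← hαβ, map_add, map_smul, map_smul, mul_add, mul_smul_comm, mul_smul_comm,
            ExteriorAlgebra.ι_sq_zero, smul_zero, add_zero,
            eq_neg_of_add_eq_zero_right (ExteriorAlgebra.ι_add_mul_swap (R := ℝ) a₁ b₁),
            smul_neg, ← neg_smul]
        rw [this, smul_smul]
        rw [show -α⁻¹ * -α = α⁻¹ * α by ring, inv_mul_cancel₀ hα, one_smul]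
    -- factor the second bivector with ι v on the left
    have hfac2 : ∃ (y : V) (d : ℝ),
        ExteriorAlgebra.ι ℝ a₂ * ExteriorAlgebra.ι ℝ b₂ = d • (iv * ExteriorAlgebra.ι ℝ y) := by
      by_cases hγ : γ = 0
      · have hδ : δ ≠ 0 := by
          intro hδ; apply hv0; rw [← hγδ, hγ, hδ, zero_smul, zero_smul, add_zero]
        refine ⟨a₂, -δ⁻¹, ?_⟩
        have : iv * ExteriorAlgebra.ι ℝ a₂
            = (-δ) • (ExteriorAlgebra.ι ℝ a₂ * ExteriorAlgebra.ι ℝ b₂) := by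
          rw [hiv, ← hγδ, hγ, zero_smul, zero_add, map_smul, smul_mul_assoc,
            eq_neg_of_add_eq_zero_right (ExteriorAlgebra.ι_add_mul_swap (R := ℝ) a₂ b₂),
            smul_neg, ← neg_smul]
        rw [this, smul_smul]
        rw [show -δ⁻¹ * -δ = δ⁻¹ * δ by ring, inv_mul_cancel₀ hδ, one_smul]
      · refine ⟨b₂, γ⁻¹, ?_⟩
        have : iv * ExteriorAlgebra.ι ℝ b₂
            = γ • (ExteriorAlgebra.ι ℝ a₂ * ExteriorAlgebra.ι ℝ b₂) := by
          rw [hiv, ← hγδ, map_add, map_smul, map_smul, add_mul, smul_mul_assoc, smul_mul_assoc,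
            ExteriorAlgebra.ι_sq_zero, smul_zero, add_zero]
        rw [this, smul_smul, inv_mul_cancel₀ hγ, one_smul]
    obtain ⟨x, c, hc⟩ := hfac1
    obtain ⟨y, d, hd⟩ := hfac2
    rw [hc, hd, key]
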